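/- Markov's inequality for polynomials: if F is a real polynomial of degree at most n, then max_{x∈[−1,1]} |F′(x)| ≤ n² · max_{x∈[−1,1]} |F(x)|. -/

import Mathlib

open Set Finset Polynomial Real
open scoped Real

noncomputable section MarkovAux

/-- node angles -/
def mAng (n k : ℕ) : ℝ := (2 * k + 1) * π / (2 * n)

/-- primitive root piece -/
def mU (n : ℕ) : ℂ := Complex.exp (↑(π / (2 * n)) * Complex.I)

def mZ (n k : ℕ) : ℂ := mU n ^ (2 * k + 1)

lemma mU_pow (n j : ℕ) : mU n ^ j = Complex.exp (↑(j * π / (2 * n)) * Complex.I) := by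
  rw [mU, ← Complex.exp_nat_mul]
  push_cast
  ring_nf

lemma mZ_eq (n k : ℕ) : mZ n k = Complex.exp (↑(mAng n k) * Complex.I) := by
  rw [mZ, mU_pow, mAng]
  push_cast
  ring_nf

lemma mU_ne_zero (n : ℕ) : mU n ≠ 0 := Complex.exp_ne_zero _

lemma mU_pow_two_n (n : ℕ) (hn : 1 ≤ n) : mU n ^ (2 * n) = -1 := by
  rw [mU_pow]
  have h : (↑(2 * n) * π / (2 * n) : ℝ) = π := by
    field_simp
    push_cast
    ring
  rw [h, Complex.exp_mul_I]
  simp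

lemma mU_pow_four_n (n : ℕ) (hn : 1 ≤ n) : mU n ^ (4 * n) = 1 := by
  have : (4 : ℕ) * n = 2 * n + 2 * n := by ring
  rw [this, pow_add, mU_pow_two_n n hn]
  ring

lemma mZ_ne_zero (n k : ℕ) : mZ n k ≠ 0 := pow_ne_zero _ (mU_ne_zero n)

lemma mZ_pow_two_n (n : ℕ) (hn : 1 ≤ n) (k : ℕ) : mZ n k ^ (2 * n) = -1 := by
  rw [mZ, ← pow_mul, mul_comm (2 * k + 1) (2 * n), pow_mul, mU_pow_two_n n hn]
  rw [Odd.neg_one_pow ⟨k, by ring⟩]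

lemma mZ_ne_one (n : ℕ) (hn : 1 ≤ n) (k : ℕ) : mZ n k ≠ 1 := by
  intro h
  have := mZ_pow_two_n n hn k
  rw [h, one_pow] at this
  norm_num at this

lemma mZ_pow_n (n : ℕ) (hn : 1 ≤ n) (k : ℕ) :
    mZ n k ^ n = (-1 : ℂ) ^ k * Complex.I := by
  rw [mZ, ← pow_mul]
  have : (2 * k + 1) * n = (2 * n) * k + n := by ring
  rw [this, pow_add, pow_mul, mU_pow_two_n n hn]
  congr 1
  rw [mU_pow]
  have h : ((n : ℝ) * π / (2 * n) : ℝ) = π / 2 := by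
    have : (n : ℝ) ≠ 0 := by positivity
    field_simp
  rw [h, Complex.exp_mul_I]
  simp

lemma mZ_reflect (n k : ℕ) (hn : 1 ≤ n) (hk : k < 2 * n) :
    mZ n (2 * n - 1 - k) = (mZ n k)⁻¹ := by
  have harith : (2 * (2 * n - 1 - k) + 1) + (2 * k + 1) = 4 * n := by omega
  have : mZ n (2 * n - 1 - k) * mZ n k = 1 := by
    rw [mZ, mZ, ← pow_add, harith, mU_pow_four_n n hn]
  field_simp [mZ_ne_zero] at this ⊢
  linear_combination this

/-- power sums of the roots -/
lemma mP_sum (n j : ℕ) (hn : 1 ≤ n) (h1 : 1 ≤ j) (h2 : j < 2 * n) :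
    ∑ k ∈ Finset.range (2 * n), mZ n k ^ j = 0 := by
  have hterm : ∀ k, mZ n k ^ j = mU n ^ j * (mU n ^ (2 * j)) ^ k := by
    intro k
    rw [mZ, ← pow_mul, ← pow_mul, ← pow_add]
    congr 1
    ring
  simp only [hterm]
  rw [← Finset.mul_sum]
  have hne : mU n ^ (2 * j) ≠ 1 := by
    rw [mU_pow]
    intro h
    have h2n : (0:ℝ) < 2 * n := by positivity
    have harg : (↑(2 * j) * π / (2 * n) : ℝ) = j * π / n := by
      push_cast; field_simp
    rw [harg] at h
    have hre : Real.cos ((j : ℝ) * π / n) = 1 := by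
      have := congrArg Complex.re h
      rwa [Complex.exp_ofReal_mul_I_re, Complex.one_re] at this
    have hlt : (j : ℝ) * π / n < 2 * π := by
      rw [div_lt_iff₀ (by positivity : (0:ℝ) < (n:ℝ))]
      have : (j : ℝ) < 2 * n := by exact_mod_cast h2
      nlinarith [Real.pi_pos]
    have hgt : (0:ℝ) < (j : ℝ) * π / n := by
      have : (0:ℝ) < (j:ℝ) := by exact_mod_cast h1
      positivity
    rw [Real.cos_eq_one_iff_of_lt_of_lt (by linarith) hlt] at hre
    linarith
  rw [geom_sum_eq hne]
  have : (mU n ^ (2 * j)) ^ (2 * n) = 1 := by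
    rw [← pow_mul]
    have : 2 * j * (2 * n) = 4 * n * j := by ring
    rw [this, pow_mul, mU_pow_four_n n hn, one_pow]
  rw [this]
  simp


lemma mR1 (n : ℕ) (hn : 1 ≤ n) :
    ∑ k ∈ Finset.range (2 * n), (mZ n k - 1)⁻¹ = -(n : ℂ) := by
  set S := ∑ k ∈ Finset.range (2 * n), (mZ n k - 1)⁻¹ with hS
  have hrefl : S = ∑ k ∈ Finset.range (2 * n), (mZ n (2 * n - 1 - k) - 1)⁻¹ :=
    (Finset.sum_range_reflect (fun k => (mZ n k - 1)⁻¹) (2 * n)).symm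
  have hpair : ∀ k ∈ Finset.range (2 * n),
      (mZ n k - 1)⁻¹ + (mZ n (2 * n - 1 - k) - 1)⁻¹ = -1 := by
    intro k hk
    rw [Finset.mem_range] at hk
    rw [mZ_reflect n k hn hk]
    have hz0 : mZ n k ≠ 0 := mZ_ne_zero n k
    have hz1 : mZ n k - 1 ≠ 0 := sub_ne_zero.mpr (mZ_ne_one n hn k)
    have hz1' : (mZ n k)⁻¹ - 1 ≠ 0 := by
      rw [sub_ne_zero]
      intro h
      exact mZ_ne_one n hn k (by rw [← inv_inv (mZ n k), h, inv_one])
    have hz1'' : (1:ℂ) - mZ n k ≠ 0 := fun h => hz1 (by linear_combination -h)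
    field_simp
    ring
  have h2 : S + S = -(2 * n : ℂ) := by
    nth_rewrite 2 [hrefl]
    rw [← Finset.sum_add_distrib, Finset.sum_congr rfl hpair]
    simp
  push_cast at h2
  linear_combination h2 / 2

lemma mR (n j : ℕ) (hn : 1 ≤ n) (h1 : 1 ≤ j) (h2 : j ≤ 2 * n) :
    ∑ k ∈ Finset.range (2 * n), mZ n k ^ j * (mZ n k - 1)⁻¹ = (n : ℂ) := by
  have hterm : ∀ k ∈ Finset.range (2 * n),
      mZ n k ^ j * (mZ n k - 1)⁻¹
        = (∑ b ∈ Finset.range j, mZ n k ^ b) + (mZ n k - 1)⁻¹ := by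
    intro k _
    have hz1 : mZ n k - 1 ≠ 0 := sub_ne_zero.mpr (mZ_ne_one n hn k)
    rw [← sub_eq_iff_eq_add]
    have hgeom := geom_sum_mul (mZ n k) j
    have hA : (mZ n k - 1)⁻¹ * (mZ n k - 1) = 1 := inv_mul_cancel₀ hz1
    linear_combination (-(mZ n k - 1)⁻¹) * hgeom
      + (∑ b ∈ Finset.range j, mZ n k ^ b) * hA
  rw [Finset.sum_congr rfl hterm, Finset.sum_add_distrib, mR1 n hn]
  rw [Finset.sum_comm]
  have hinner : ∀ b ∈ Finset.range j,
      ∑ k ∈ Finset.range (2 * n), mZ n k ^ b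
        = if b = 0 then (2 * n : ℂ) else 0 := by
    intro b hb
    rw [Finset.mem_range] at hb
    by_cases hb0 : b = 0
    · simp [hb0]
    · rw [if_neg hb0]
      exact mP_sum n b hn (Nat.one_le_iff_ne_zero.mpr hb0) (lt_of_lt_of_le hb h2)
  rw [Finset.sum_congr rfl hinner, Finset.sum_ite_eq' (Finset.range j) 0 (fun _ => (2*n:ℂ))]
  rw [if_pos (Finset.mem_range.mpr h1)]
  push_cast
  ring

lemma mQ0 (n : ℕ) (hn : 1 ≤ n) :
    ∑ k ∈ Finset.range (2 * n), mZ n k ^ (n + 1) * ((mZ n k - 1)⁻¹) ^ 2 = 0 := by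
  set f := fun k => mZ n k ^ (n + 1) * ((mZ n k - 1)⁻¹) ^ 2 with hf
  set S := ∑ k ∈ Finset.range (2 * n), f k with hS
  have hrefl : S = ∑ k ∈ Finset.range (2 * n), f (2 * n - 1 - k) :=
    (Finset.sum_range_reflect f (2 * n)).symm
  have hpair : ∀ k ∈ Finset.range (2 * n), f k + f (2 * n - 1 - k) = 0 := by
    intro k hk
    rw [Finset.mem_range] at hk
    have hz0 : mZ n k ≠ 0 := mZ_ne_zero n k
    have hz1 : mZ n k - 1 ≠ 0 := sub_ne_zero.mpr (mZ_ne_one n hn k)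
    have hz1' : (mZ n k)⁻¹ - 1 ≠ 0 := by
      rw [sub_ne_zero]
      intro h
      exact mZ_ne_one n hn k (by rw [← inv_inv (mZ n k), h, inv_one])
    have hw : mZ n k ^ n * mZ n k ^ n = -1 := by
      rw [← pow_add]
      have h2n : n + n = 2 * n := by ring
      rw [h2n]
      exact mZ_pow_two_n n hn k
    have hw0 : mZ n k ^ n ≠ 0 := pow_ne_zero _ hz0
    have hzinv : (mZ n k)⁻¹ * mZ n k = 1 := inv_mul_cancel₀ hz0
    have hA : (mZ n k - 1)⁻¹ * (mZ n k - 1) = 1 := inv_mul_cancel₀ hz1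
    have hinv3 : ((mZ n k)⁻¹ - 1)⁻¹ = -(mZ n k) * (mZ n k - 1)⁻¹ := by
      apply inv_eq_of_mul_eq_one_right
      linear_combination (-(mZ n k - 1)⁻¹) * hzinv + hA
    have hBinv : (mZ n k ^ n)⁻¹ = -(mZ n k ^ n) := by
      apply inv_eq_of_mul_eq_one_right
      linear_combination -hw
    simp only [hf, mZ_reflect n k hn hk]
    rw [hinv3, inv_pow (mZ n k) (n+1), pow_succ (mZ n k) n, mul_inv, hBinv, pow_succ]
    linear_combination (-(mZ n k ^ n) * mZ n k * ((mZ n k - 1)⁻¹)^2) * hzinv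
  have h2 : S + S = 0 := by
    nth_rewrite 2 [hrefl]
    rw [← Finset.sum_add_distrib, Finset.sum_congr rfl hpair]
    simp
  linear_combination h2 / 2

lemma mQ (n m : ℕ) (hn : 1 ≤ n) (hm : m ≤ n) :
    ∑ k ∈ Finset.range (2 * n), mZ n k ^ (n + 1 + m) * ((mZ n k - 1)⁻¹) ^ 2
      = (n : ℂ) * m := by
  have hterm : ∀ k ∈ Finset.range (2 * n),
      mZ n k ^ (n + 1 + m) * ((mZ n k - 1)⁻¹) ^ 2
        = mZ n k ^ (n + 1) * ((mZ n k - 1)⁻¹) ^ 2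
          + ∑ a ∈ Finset.range m, mZ n k ^ (n + 1 + a) * (mZ n k - 1)⁻¹ := by
    intro k _
    have hz1 : mZ n k - 1 ≠ 0 := sub_ne_zero.mpr (mZ_ne_one n hn k)
    have hinv : (mZ n k - 1)⁻¹ * (mZ n k - 1) = 1 := inv_mul_cancel₀ hz1
    have hgeom : mZ n k ^ m - 1 = (∑ a ∈ Finset.range m, mZ n k ^ a) * (mZ n k - 1) :=
      (geom_sum_mul (mZ n k) m).symm
    have expand : ∀ a ∈ Finset.range m,
        mZ n k ^ (n + 1 + a) * (mZ n k - 1)⁻¹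
          = mZ n k ^ (n+1) * mZ n k ^ a * (mZ n k - 1)⁻¹ := by
      intro a _
      rw [pow_add]
    rw [Finset.sum_congr rfl expand, ← Finset.sum_mul, ← Finset.mul_sum, pow_add]
    linear_combination (mZ n k ^ (n+1) * ((mZ n k - 1)⁻¹)^2) * hgeom
      + (mZ n k ^ (n+1) * (mZ n k - 1)⁻¹
          * (∑ a ∈ Finset.range m, mZ n k ^ a)) * hinv
  rw [Finset.sum_congr rfl hterm, Finset.sum_add_distrib, mQ0 n hn, zero_add]
  rw [Finset.sum_comm]
  have hinner : ∀ a ∈ Finset.range m,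
      ∑ k ∈ Finset.range (2 * n), mZ n k ^ (n + 1 + a) * (mZ n k - 1)⁻¹ = (n : ℂ) := by
    intro a ha
    rw [Finset.mem_range] at ha
    exact mR n (n + 1 + a) hn (by omega) (by omega)
  rw [Finset.sum_congr rfl hinner]
  simp [mul_comm]


/-- the Riesz weights (up to the factor 1/(4n)) -/
def mLam (n k : ℕ) : ℝ := (-1) ^ k / Real.sin (mAng n k / 2) ^ 2

lemma mAng_mem (n k : ℕ) (hn : 1 ≤ n) (hk : k < 2 * n) :
    0 < mAng n k ∧ mAng n k < 2 * π := by
  have hpi := Real.pi_pos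
  have hn' : (0:ℝ) < 2 * n := by positivity
  constructor
  · apply div_pos _ hn'
    positivity
  · rw [mAng, div_lt_iff₀ hn']
    have h1 : (2 * k + 1 : ℝ) < 2 * (2 * n) := by
      have : (k : ℝ) + 1 ≤ 2 * n := by exact_mod_cast hk
      linarith
    nlinarith [mul_lt_mul_of_pos_right h1 hpi]

lemma mSin_half_pos (n k : ℕ) (hn : 1 ≤ n) (hk : k < 2 * n) :
    0 < Real.sin (mAng n k / 2) := by
  obtain ⟨h1, h2⟩ := mAng_mem n k hn hk
  apply Real.sin_pos_of_pos_of_lt_pi <;> [positivity; linarith]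

lemma mCos_half (n k : ℕ) :
    Real.cos (mAng n k) = 1 - 2 * Real.sin (mAng n k / 2) ^ 2 := by
  have h := Real.cos_two_mul' (mAng n k / 2)
  have h2 := Real.sin_sq_add_cos_sq (mAng n k / 2)
  have : 2 * (mAng n k / 2) = mAng n k := by ring
  rw [this] at h
  linarith

lemma mZsq (n k : ℕ) :
    (mZ n k - 1) ^ 2 = -4 * (↑(Real.sin (mAng n k / 2)) : ℂ) ^ 2 * mZ n k := by
  have hz : mZ n k = (↑(Real.cos (mAng n k)) : ℂ) + ↑(Real.sin (mAng n k)) * Complex.I := by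
    rw [mZ_eq, Complex.exp_mul_I, Complex.ofReal_cos, Complex.ofReal_sin]
  have hid1 : ((Real.cos (mAng n k) : ℂ)) ^ 2 + ((Real.sin (mAng n k) : ℂ)) ^ 2 = 1 := by
    norm_cast
    exact Real.cos_sq_add_sin_sq _
  have hid2 : ((Real.cos (mAng n k) : ℂ)) = 1 - 2 * ((Real.sin (mAng n k / 2) : ℂ)) ^ 2 := by
    norm_cast
    exact mCos_half n k
  rw [hid2] at hid1
  rw [hz, hid2]
  linear_combination ((Real.sin (mAng n k) : ℂ))^2 * Complex.I_sq - hid1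

lemma mTerm (n m k : ℕ) (hn : 1 ≤ n) (hk : k < 2 * n) :
    (↑(mLam n k) : ℂ) * Complex.exp (↑((m : ℝ) * mAng n k) * Complex.I)
      = 4 * Complex.I * (mZ n k ^ (n + 1 + m) * ((mZ n k - 1)⁻¹) ^ 2) := by
  have hs := mSin_half_pos n k hn hk
  have hs0 : ((Real.sin (mAng n k / 2) : ℂ)) ≠ 0 := by
    exact_mod_cast ne_of_gt hs
  have hz0 : mZ n k ≠ 0 := mZ_ne_zero n k
  have hz1 : mZ n k - 1 ≠ 0 := sub_ne_zero.mpr (mZ_ne_one n hn k)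
  have hexp : Complex.exp (↑((m : ℝ) * mAng n k) * Complex.I) = mZ n k ^ m := by
    rw [mZ_eq, ← Complex.exp_nat_mul]
    push_cast
    ring_nf
  have hA2 : ((mZ n k - 1)⁻¹) ^ 2 = (-4 * ((Real.sin (mAng n k / 2) : ℂ)) ^ 2 * mZ n k)⁻¹ := by
    rw [inv_pow, mZsq n k]
  rw [hexp, hA2, mLam]
  set sh : ℝ := Real.sin (mAng n k / 2) with hsh
  have hpow : mZ n k ^ (n + 1 + m) = ((-1:ℂ)^k * Complex.I) * mZ n k * mZ n k ^ m := by
    rw [pow_add, pow_add, mZ_pow_n n hn k, pow_one]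
  rw [hpow]
  have hinv : (-4 * ((sh : ℂ)) ^ 2 * mZ n k)⁻¹
      = (-4)⁻¹ * (((sh : ℂ)) ^ 2)⁻¹ * (mZ n k)⁻¹ := by
    rw [mul_inv, mul_inv]
  rw [hinv]
  have hcast : ((((-1:ℝ)) ^ k / sh ^ 2 : ℝ) : ℂ) = (-1:ℂ)^k * (((sh:ℂ))^2)⁻¹ := by
    push_cast
    rw [div_eq_mul_inv]
  rw [hcast]
  have hzz : mZ n k * (mZ n k)⁻¹ = 1 := mul_inv_cancel₀ hz0
  linear_combination ((-1:ℂ)^k * mZ n k ^ m * (((sh:ℂ))^2)⁻¹ * mZ n k * (mZ n k)⁻¹)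
      * Complex.I_sq
    + (-((-1:ℂ)^k * mZ n k ^ m * (((sh:ℂ))^2)⁻¹)) * hzz

lemma mLam_sum (n m : ℕ) (hn : 1 ≤ n) (hm : m ≤ n) :
    ∑ k ∈ Finset.range (2 * n), (↑(mLam n k) : ℂ)
        * Complex.exp (↑((m : ℝ) * mAng n k) * Complex.I)
      = 4 * (n : ℂ) * m * Complex.I := by
  rw [Finset.sum_congr rfl (fun k hk => mTerm n m k hn (Finset.mem_range.mp hk))]
  rw [← Finset.mul_sum, mQ n m hn hm]
  ring


lemma mReIm (A B C : ℝ) (h : (A : ℂ) + (B : ℂ) * Complex.I = (C : ℂ) * Complex.I) :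
    A = 0 ∧ B = C := by
  rw [Complex.ext_iff] at h
  simpa using h

lemma mCS (n m : ℕ) (hn : 1 ≤ n) (hm : m ≤ n) :
    ∑ k ∈ Finset.range (2 * n), mLam n k * Real.cos ((m : ℝ) * mAng n k) = 0 := by
  have h := mLam_sum n m hn hm
  have hterm : ∀ k ∈ Finset.range (2 * n),
      (↑(mLam n k) : ℂ) * Complex.exp (↑((m : ℝ) * mAng n k) * Complex.I)
        = (↑(mLam n k * Real.cos ((m : ℝ) * mAng n k)) : ℂ)
          + (↑(mLam n k * Real.sin ((m : ℝ) * mAng n k)) : ℂ) * Complex.I := by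
    intro k _
    rw [Complex.exp_mul_I, ← Complex.ofReal_cos, ← Complex.ofReal_sin,
      Complex.ofReal_mul, Complex.ofReal_mul]
    ring
  rw [Finset.sum_congr rfl hterm, Finset.sum_add_distrib, ← Finset.sum_mul,
    ← Complex.ofReal_sum, ← Complex.ofReal_sum] at h
  have hR : (4 * (n:ℂ) * m * Complex.I) = ((4 * n * m : ℝ) : ℂ) * Complex.I := by
    push_cast; ring
  rw [hR] at h
  exact (mReIm _ _ _ h).1

lemma mSS (n m : ℕ) (hn : 1 ≤ n) (hm : m ≤ n) :
    ∑ k ∈ Finset.range (2 * n), mLam n k * Real.sin ((m : ℝ) * mAng n k)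
      = 4 * n * m := by
  have h := mLam_sum n m hn hm
  have hterm : ∀ k ∈ Finset.range (2 * n),
      (↑(mLam n k) : ℂ) * Complex.exp (↑((m : ℝ) * mAng n k) * Complex.I)
        = (↑(mLam n k * Real.cos ((m : ℝ) * mAng n k)) : ℂ)
          + (↑(mLam n k * Real.sin ((m : ℝ) * mAng n k)) : ℂ) * Complex.I := by
    intro k _
    rw [Complex.exp_mul_I, ← Complex.ofReal_cos, ← Complex.ofReal_sin,
      Complex.ofReal_mul, Complex.ofReal_mul]
    ring
  rw [Finset.sum_congr rfl hterm, Finset.sum_add_distrib, ← Finset.sum_mul,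
    ← Complex.ofReal_sum, ← Complex.ofReal_sum] at h
  have hR : (4 * (n:ℂ) * m * Complex.I) = ((4 * n * m : ℝ) : ℂ) * Complex.I := by
    push_cast; ring
  rw [hR] at h
  exact (mReIm _ _ _ h).2

/-- The Riesz interpolation identity on the cosine basis. -/
lemma mRiesz_cos (n m : ℕ) (hn : 1 ≤ n) (hm : m ≤ n) (θ : ℝ) :
    ∑ k ∈ Finset.range (2 * n), mLam n k * Real.cos ((m : ℝ) * (θ + mAng n k))
      = -(4 * n) * ((m : ℝ) * Real.sin ((m : ℝ) * θ)) := by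
  have hterm : ∀ k ∈ Finset.range (2 * n),
      mLam n k * Real.cos ((m : ℝ) * (θ + mAng n k))
        = Real.cos ((m:ℝ) * θ) * (mLam n k * Real.cos ((m : ℝ) * mAng n k))
          - Real.sin ((m:ℝ) * θ) * (mLam n k * Real.sin ((m : ℝ) * mAng n k)) := by
    intro k _
    have : (m : ℝ) * (θ + mAng n k) = (m:ℝ) * θ + (m:ℝ) * mAng n k := by ring
    rw [this, Real.cos_add]
    ring
  rw [Finset.sum_congr rfl hterm, Finset.sum_sub_distrib, ← Finset.mul_sum, ← Finset.mul_sum,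
    mCS n m hn hm, mSS n m hn hm]
  ring


lemma mT_natDegree_le : ∀ m : ℕ, (Polynomial.Chebyshev.T ℝ m).natDegree ≤ m := by
  intro m
  induction m using Nat.strong_induction_on with
  | _ m ih =>
    match m with
    | 0 => simp [Polynomial.Chebyshev.T_zero]
    | 1 => simp [Polynomial.Chebyshev.T_one, Polynomial.natDegree_X_le]
    | (m+2) =>
      have hcast : ((m + 2 : ℕ) : ℤ) = (m : ℤ) + 2 := by push_cast; ring
      rw [hcast, Polynomial.Chebyshev.T_add_two]
      have hre : ((m : ℤ) + 1) = ((m + 1 : ℕ) : ℤ) := by push_cast; ring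
      rw [hre]
      apply le_trans (Polynomial.natDegree_sub_le _ _)
      rw [max_le_iff]
      constructor
      · apply le_trans (Polynomial.natDegree_mul_le)
        have h1 : (2 * Polynomial.X : Polynomial ℝ).natDegree ≤ 1 := by
          apply le_trans (Polynomial.natDegree_mul_le)
          simp
        have h2 := ih (m+1) (by omega)
        omega
      · exact le_trans (ih m (by omega)) (by omega)

lemma mT_coeff : ∀ m : ℕ, (Polynomial.Chebyshev.T ℝ ((m : ℤ) + 1)).coeff (m + 1) = 2 ^ m := by
  intro m
  induction m using Nat.strong_induction_on with
  | _ m ih =>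
    match m with
    | 0 =>
      norm_num [Polynomial.Chebyshev.T_one]
    | 1 =>
      have h1 : ((1 : ℕ) : ℤ) + 1 = 2 := by norm_num
      rw [h1, Polynomial.Chebyshev.T_two]
      have hC : (2 : Polynomial ℝ) = Polynomial.C 2 := (map_ofNat Polynomial.C 2).symm
      rw [hC, Polynomial.coeff_sub, Polynomial.coeff_C_mul, Polynomial.coeff_X_pow,
        Polynomial.coeff_one]
      norm_num
    | (m+2) =>
      have hcast : (((m + 2 : ℕ)) : ℤ) + 1 = ((m : ℤ) + 1) + 2 := by push_cast; ring
      rw [hcast, Polynomial.Chebyshev.T_add_two]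
      have hdeg : (Polynomial.Chebyshev.T ℝ ((m : ℤ) + 1)).coeff (m + 3) = 0 := by
        apply Polynomial.coeff_eq_zero_of_natDegree_lt
        have h := mT_natDegree_le (m+1)
        have : ((m : ℤ) + 1) = ((m + 1 : ℕ) : ℤ) := by push_cast; ring
        rw [this]
        omega
      have hih := ih (m+1) (by omega)
      have hix : ((m + 1 : ℕ) : ℤ) + 1 = (m : ℤ) + 1 + 1 := by push_cast; ring
      rw [hix] at hih
      have hC : (2 : Polynomial ℝ) = Polynomial.C 2 := (map_ofNat Polynomial.C 2).symm
      have hkey : (2 * Polynomial.X * Polynomial.Chebyshev.T ℝ ((m : ℤ) + 1 + 1)).coeff (m + 3)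
          = 2 * (Polynomial.Chebyshev.T ℝ ((m : ℤ) + 1 + 1)).coeff (m + 2) := by
        rw [mul_assoc, hC, Polynomial.coeff_C_mul]
        congr 1
        have h3 : m + 3 = (m + 2) + 1 := by ring
        rw [h3, Polynomial.coeff_X_mul]
      have hshow : m + 2 + 1 = m + 3 := by ring
      rw [Polynomial.coeff_sub, hshow, hkey, hdeg, hih]
      ring

lemma mRiesz_T (n m : ℕ) (hn : 1 ≤ n) (hm : m ≤ n) (θ : ℝ) :
    ∑ k ∈ Finset.range (2 * n),
        mLam n k * (Polynomial.Chebyshev.T ℝ m).eval (Real.cos (θ + mAng n k))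
      = -(4 * (n:ℝ)) * (Real.sin θ
          * ((Polynomial.derivative (Polynomial.Chebyshev.T ℝ m)).eval (Real.cos θ))) := by
  have hL : ∀ k, (Polynomial.Chebyshev.T ℝ m).eval (Real.cos (θ + mAng n k))
      = Real.cos ((m:ℝ) * (θ + mAng n k)) := by
    intro k
    have := Polynomial.Chebyshev.T_real_cos (θ + mAng n k) m
    rw [this]
    norm_num
  have hR : Real.sin θ * ((Polynomial.derivative (Polynomial.Chebyshev.T ℝ m)).eval (Real.cos θ))
      = (m:ℝ) * Real.sin ((m:ℝ) * θ) := by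
    rw [Polynomial.Chebyshev.T_derivative_eq_U]
    have hU := Polynomial.Chebyshev.U_real_cos θ ((m:ℤ) - 1)
    have harg : (((m : ℤ) - 1 : ℤ) : ℝ) + 1 = (m : ℝ) := by push_cast; ring
    rw [harg] at hU
    simp only [Polynomial.eval_mul, Polynomial.eval_intCast]
    push_cast
    rw [← hU]
    ring
  simp only [hL]
  rw [mRiesz_cos n m hn hm θ, hR]

lemma mRiesz_poly (n : ℕ) (hn : 1 ≤ n) (F : Polynomial ℝ) (hF : F.natDegree ≤ n) (θ : ℝ) :
    ∑ k ∈ Finset.range (2 * n), mLam n k * F.eval (Real.cos (θ + mAng n k))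
      = -(4 * (n:ℝ)) * (Real.sin θ * ((Polynomial.derivative F).eval (Real.cos θ))) := by
  suffices H : ∀ N : ℕ, ∀ p : Polynomial ℝ, p.natDegree ≤ N → p.natDegree ≤ n → ∀ ψ : ℝ,
      ∑ k ∈ Finset.range (2 * n), mLam n k * p.eval (Real.cos (ψ + mAng n k))
        = -(4 * (n:ℝ)) * (Real.sin ψ * ((Polynomial.derivative p).eval (Real.cos ψ))) by
    exact H n F hF hF θ
  intro N
  induction N using Nat.strong_induction_on with
  | _ N ih =>
    intro p hpN hpn ψ
    by_cases hp0 : p = 0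
    · simp [hp0]
    set d := p.natDegree with hd
    have hTc : (Polynomial.Chebyshev.T ℝ d).coeff d ≠ 0 := by
      match hdm : d with
      | 0 => simp [Polynomial.Chebyshev.T_zero]
      | (e+1) =>
        have hcix : (((e + 1 : ℕ)) : ℤ) = (e : ℤ) + 1 := by push_cast; ring
        rw [hcix, mT_coeff e]
        positivity
    set c : ℝ := p.coeff d / (Polynomial.Chebyshev.T ℝ d).coeff d with hc
    set q : Polynomial ℝ := p - Polynomial.C c * Polynomial.Chebyshev.T ℝ d with hqdef
    have hbase : ∀ ψ : ℝ,
        ∑ k ∈ Finset.range (2 * n),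
            mLam n k * (Polynomial.C c * Polynomial.Chebyshev.T ℝ d).eval
              (Real.cos (ψ + mAng n k))
          = -(4 * (n:ℝ)) * (Real.sin ψ
              * ((Polynomial.derivative (Polynomial.C c * Polynomial.Chebyshev.T ℝ d)).eval
                  (Real.cos ψ))) := by
      intro ψ'
      have h := mRiesz_T n d hn (hd ▸ hpn) ψ'
      simp only [Polynomial.eval_mul, Polynomial.eval_C, Polynomial.derivative_C_mul]
      calc ∑ k ∈ Finset.range (2 * n),
            mLam n k * (c * (Polynomial.Chebyshev.T ℝ d).eval (Real.cos (ψ' + mAng n k)))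
          = c * ∑ k ∈ Finset.range (2 * n),
              mLam n k * (Polynomial.Chebyshev.T ℝ d).eval (Real.cos (ψ' + mAng n k)) := by
            rw [Finset.mul_sum]; apply Finset.sum_congr rfl; intro k _; ring
        _ = c * (-(4 * (n:ℝ)) * (Real.sin ψ'
              * ((Polynomial.derivative (Polynomial.Chebyshev.T ℝ d)).eval (Real.cos ψ')))) := by
            rw [h]
        _ = -(4 * (n:ℝ)) * (Real.sin ψ'
              * (c * (Polynomial.derivative (Polynomial.Chebyshev.T ℝ d)).eval (Real.cos ψ'))) := by
            ring
    by_cases hq0 : q = 0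
    · have hp : p = Polynomial.C c * Polynomial.Chebyshev.T ℝ d := by
        have : p - Polynomial.C c * Polynomial.Chebyshev.T ℝ d = 0 := hq0
        linear_combination this
      rw [hp]
      exact hbase ψ
    · have hqd : q.natDegree < d := by
        have hle : q.natDegree ≤ d := by
          apply le_trans (Polynomial.natDegree_sub_le _ _)
          rw [max_le_iff]
          refine ⟨le_rfl, ?_⟩
          apply le_trans (Polynomial.natDegree_mul_le)
          simp [mT_natDegree_le d]
        have hne : q.natDegree ≠ d := by
          intro heq
          have hlc : q.coeff d = 0 := by
            rw [hqdef]
            simp only [Polynomial.coeff_sub, Polynomial.coeff_C_mul]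
            rw [hc]
            field_simp
            ring
          rw [← heq] at hlc
          exact hq0 (Polynomial.leadingCoeff_eq_zero.mp hlc)
        omega
      have hdN : d ≤ N := hd ▸ hpN
      have hrec := ih q.natDegree (by omega) q le_rfl (by omega) ψ
      have hp : p = q + Polynomial.C c * Polynomial.Chebyshev.T ℝ d := by
        rw [hqdef]; ring
      rw [hp]
      simp only [Polynomial.eval_add, Polynomial.derivative_add]
      have hsplit : ∀ k ∈ Finset.range (2 * n),
          mLam n k * (q.eval (Real.cos (ψ + mAng n k))
              + (Polynomial.C c * Polynomial.Chebyshev.T ℝ d).eval (Real.cos (ψ + mAng n k)))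
            = mLam n k * q.eval (Real.cos (ψ + mAng n k))
              + mLam n k * (Polynomial.C c * Polynomial.Chebyshev.T ℝ d).eval
                  (Real.cos (ψ + mAng n k)) := by
        intro k _; ring
      rw [Finset.sum_congr rfl hsplit, Finset.sum_add_distrib, hrec, hbase ψ]
      ring

lemma mSinNalpha (n k : ℕ) (hn : 1 ≤ n) : Real.sin ((n:ℝ) * mAng n k) = (-1) ^ k := by
  have hne : (n:ℝ) ≠ 0 := by positivity
  have harg : (n:ℝ) * mAng n k = (k:ℝ) * π + π / 2 := by
    rw [mAng]
    field_simp
  rw [harg, Real.sin_add_pi_div_two]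
  have := Real.cos_nat_mul_pi_sub 0 k
  simpa using this

lemma mAbs_sum (n : ℕ) (hn : 1 ≤ n) :
    ∑ k ∈ Finset.range (2 * n), |mLam n k| = 4 * (n:ℝ) * n := by
  have h := mSS n n hn le_rfl
  have hterm : ∀ k ∈ Finset.range (2 * n),
      mLam n k * Real.sin ((n:ℝ) * mAng n k) = |mLam n k| := by
    intro k hk
    rw [Finset.mem_range] at hk
    rw [mSinNalpha n k hn, mLam]
    have hs := mSin_half_pos n k hn hk
    rw [abs_div, abs_pow, abs_neg, abs_one, one_pow]
    rw [abs_of_pos (by positivity : (0:ℝ) < Real.sin (mAng n k / 2) ^ 2)]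
    rcases Nat.even_or_odd k with he | ho
    · rw [he.neg_one_pow]; ring
    · rw [ho.neg_one_pow]; ring
  rw [Finset.sum_congr rfl hterm] at h
  exact h

/-- Bernstein's inequality in algebraic form. -/
lemma mBernstein (n : ℕ) (hn : 1 ≤ n) (F : Polynomial ℝ) (hF : F.natDegree ≤ n)
    (M : ℝ) (hM : ∀ y ∈ Icc (-1:ℝ) 1, |F.eval y| ≤ M) (θ : ℝ) :
    |Real.sin θ * (Polynomial.derivative F).eval (Real.cos θ)| ≤ n * M := by
  have h := mRiesz_poly n hn F hF θ
  have habs : |∑ k ∈ Finset.range (2 * n), mLam n k * F.eval (Real.cos (θ + mAng n k))|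
      ≤ 4 * (n:ℝ) * n * M := by
    apply le_trans (Finset.abs_sum_le_sum_abs _ _)
    have hterm : ∀ k ∈ Finset.range (2 * n),
        |mLam n k * F.eval (Real.cos (θ + mAng n k))| ≤ |mLam n k| * M := by
      intro k _
      rw [abs_mul]
      apply mul_le_mul_of_nonneg_left _ (abs_nonneg _)
      apply hM
      constructor
      · exact Real.neg_one_le_cos _
      · exact Real.cos_le_one _
    apply le_trans (Finset.sum_le_sum hterm)
    rw [← Finset.sum_mul, mAbs_sum n hn]
  rw [h] at habs
  rw [abs_mul, abs_neg, abs_mul] at habs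
  have h4 : |(4:ℝ)| * |(n:ℝ)| = 4 * n := by
    rw [abs_of_nonneg (by norm_num : (0:ℝ) ≤ 4), abs_of_nonneg (by positivity : (0:ℝ) ≤ (n:ℝ))]
  rw [h4] at habs
  have hnpos : (0:ℝ) < 4 * n := by positivity
  have habs' : (4 * (n:ℝ)) * |Real.sin θ * (Polynomial.derivative F).eval (Real.cos θ)|
      ≤ (4 * (n:ℝ)) * ((n:ℝ) * M) := by
    calc (4 * (n:ℝ)) * |Real.sin θ * (Polynomial.derivative F).eval (Real.cos θ)|
        ≤ 4 * (n:ℝ) * (n:ℝ) * M := habs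
      _ = (4 * (n:ℝ)) * ((n:ℝ) * M) := by ring
  exact le_of_mul_le_mul_left habs' hnpos


/-- Chebyshev nodes -/
def mNode (n k : ℕ) : ℝ := Real.cos (mAng n k)

lemma mAng_mem_pi (n k : ℕ) (hk : k < n) : 0 < mAng n k ∧ mAng n k < π := by
  have hpi := Real.pi_pos
  have hn : 1 ≤ n := by omega
  have hn' : (0:ℝ) < 2 * n := by positivity
  constructor
  · apply div_pos _ hn'
    positivity
  · rw [mAng, div_lt_iff₀ hn']
    have h1 : (2 * k + 1 : ℝ) < 2 * n := by
      have : (k:ℝ) + 1 ≤ n := by exact_mod_cast hk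
      linarith
    nlinarith [mul_lt_mul_of_pos_right h1 hpi]

lemma mAng_strictMono (n j k : ℕ) (hn : 1 ≤ n) (hjk : j < k) : mAng n j < mAng n k := by
  have hpi := Real.pi_pos
  have hn' : (0:ℝ) < 2 * n := by positivity
  rw [mAng, mAng]
  apply div_lt_div_of_pos_right _ hn'
  have : (j:ℝ) < k := by exact_mod_cast hjk
  nlinarith

lemma mNode_strictAnti (n j k : ℕ) (hjk : j < k) (hk : k < n) : mNode n k < mNode n j := by
  have hj := mAng_mem_pi n j (by omega)
  have hk' := mAng_mem_pi n k hk
  exact Real.strictAntiOn_cos ⟨hj.1.le, hj.2.le⟩ ⟨hk'.1.le, hk'.2.le⟩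
    (mAng_strictMono n j k (by omega) hjk)

lemma mNode_inj (n : ℕ) : Set.InjOn (mNode n) (Finset.range n) := by
  intro j hj k hk hjk
  simp only [Finset.coe_range, Set.mem_Iio] at hj hk
  by_contra hne
  rcases lt_or_gt_of_ne hne with h | h
  · exact absurd hjk (ne_of_gt (mNode_strictAnti n j k h hk))
  · exact absurd hjk.symm (ne_of_gt (mNode_strictAnti n k j h hj))

lemma mSin_pos (n k : ℕ) (hk : k < n) : 0 < Real.sin (mAng n k) := by
  obtain ⟨h1, h2⟩ := mAng_mem_pi n k hk
  exact Real.sin_pos_of_pos_of_lt_pi h1 h2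

lemma mT_eval_node (n k : ℕ) (hn : 1 ≤ n) :
    (Polynomial.Chebyshev.T ℝ n).eval (mNode n k) = 0 := by
  rw [mNode, Polynomial.Chebyshev.T_real_cos]
  have harg : ((n:ℤ):ℝ) * mAng n k = (k:ℝ) * π + π / 2 := by
    have hne : (n:ℝ) ≠ 0 := by positivity
    rw [mAng]
    push_cast
    field_simp
  rw [harg, Real.cos_add_pi_div_two, Real.sin_nat_mul_pi, neg_zero]

def mW (n : ℕ) : Polynomial ℝ :=
  ∏ k ∈ Finset.range n, (Polynomial.X - Polynomial.C (mNode n k))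

lemma mW_monic (n : ℕ) : (mW n).Monic :=
  Polynomial.monic_prod_of_monic _ _ (fun k _ => Polynomial.monic_X_sub_C _)

lemma mW_natDegree (n : ℕ) : (mW n).natDegree = n := by
  rw [mW, Polynomial.natDegree_prod_of_monic _ _ (fun k _ => Polynomial.monic_X_sub_C _)]
  simp

lemma mTW (n : ℕ) (hn : 1 ≤ n) :
    Polynomial.Chebyshev.T ℝ n = Polynomial.C ((2:ℝ)^(n-1)) * mW n := by
  set D := Polynomial.Chebyshev.T ℝ n - Polynomial.C ((2:ℝ)^(n-1)) * mW n with hD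
  have hWcoeff : (mW n).coeff n = 1 := by
    have := (mW_monic n).leadingCoeff
    rwa [Polynomial.leadingCoeff, mW_natDegree] at this
  have hTcoeff : (Polynomial.Chebyshev.T ℝ n).coeff n = 2^(n-1) := by
    have h := mT_coeff (n-1)
    have h1 : ((n-1 : ℕ) : ℤ) + 1 = (n : ℤ) := by omega
    have h2 : (n-1) + 1 = n := by omega
    rwa [h1, h2] at h
  have hDcoeff : D.coeff n = 0 := by
    rw [hD, Polynomial.coeff_sub, Polynomial.coeff_C_mul, hWcoeff, hTcoeff]
    ring
  have hDdeg : D.natDegree ≤ n := by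
    rw [hD]
    apply le_trans (Polynomial.natDegree_sub_le _ _)
    rw [max_le_iff]
    constructor
    · exact mT_natDegree_le n
    · apply le_trans (Polynomial.natDegree_mul_le)
      simp [mW_natDegree]
  have hDeval : ∀ k < n, D.eval (mNode n k) = 0 := by
    intro k hk
    rw [hD, Polynomial.eval_sub, Polynomial.eval_mul, mT_eval_node n k hn]
    have hWeval : (mW n).eval (mNode n k) = 0 := by
      rw [mW, Polynomial.eval_prod]
      apply Finset.prod_eq_zero (Finset.mem_range.mpr hk)
      simp
    rw [hWeval]
    ring
  by_cases hD0 : D = 0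
  · linear_combination hD0
  · exfalso
    have hDlt : D.natDegree < n := by
      rcases lt_or_eq_of_le hDdeg with h | h
      · exact h
      · exfalso
        apply hD0
        apply Polynomial.leadingCoeff_eq_zero.mp
        rw [Polynomial.leadingCoeff, h, hDcoeff]
    have := Polynomial.eq_zero_of_natDegree_lt_card_of_eval_eq_zero' D
      ((Finset.range n).image (mNode n))
      (by
        intro x hx
        rw [Finset.mem_image] at hx
        obtain ⟨k, hk, rfl⟩ := hx
        exact hDeval k (Finset.mem_range.mp hk))
      (by
        rw [Finset.card_image_of_injOn (mNode_inj n)]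
        simpa using hDlt)
    exact hD0 this

lemma mDerivProd (s : Finset ℕ) (t : ℕ → ℝ) :
    Polynomial.derivative (∏ j ∈ s, (Polynomial.X - Polynomial.C (t j)))
      = ∑ k ∈ s, ∏ j ∈ s.erase k, (Polynomial.X - Polynomial.C (t j)) := by
  induction s using Finset.induction with
  | empty => simp
  | insert a s ha ih =>
    rw [Finset.prod_insert ha, Polynomial.derivative_mul, ih, Polynomial.derivative_X_sub_C,
      Finset.sum_insert ha, one_mul, Finset.erase_insert ha]
    congr 1
    rw [Finset.mul_sum]
    apply Finset.sum_congr rfl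
    intro k hk
    rw [Finset.erase_insert_of_ne ((ne_of_mem_of_not_mem hk ha).symm), Finset.prod_insert
      (fun h => ha (Finset.mem_of_mem_erase h))]

lemma mWd_eval (n : ℕ) (x : ℝ) :
    (Polynomial.derivative (mW n)).eval x
      = ∑ k ∈ Finset.range n, ∏ j ∈ (Finset.range n).erase k, (x - mNode n j) := by
  rw [mW, mDerivProd]
  rw [Polynomial.eval_finset_sum]
  apply Finset.sum_congr rfl
  intro k _
  rw [Polynomial.eval_prod]
  apply Finset.prod_congr rfl
  intro j _
  simp

lemma mWd_node (n k : ℕ) (hk : k < n) :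
    (Polynomial.derivative (mW n)).eval (mNode n k)
      = ∏ j ∈ (Finset.range n).erase k, (mNode n k - mNode n j) := by
  rw [mWd_eval]
  apply Finset.sum_eq_single k
  · intro i hi hik
    apply Finset.prod_eq_zero (Finset.mem_erase.mpr ⟨(Ne.symm hik), Finset.mem_range.mpr hk⟩)
    ring
  · intro h
    exact absurd (Finset.mem_range.mpr hk) h

lemma mTd_node (n k : ℕ) (hn : 1 ≤ n) (hk : k < n) :
    (Polynomial.derivative (Polynomial.Chebyshev.T ℝ n)).eval (mNode n k)
        * Real.sin (mAng n k) = n * (-1)^k := by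
  rw [Polynomial.Chebyshev.T_derivative_eq_U]
  have hU := Polynomial.Chebyshev.U_real_cos (mAng n k) ((n:ℤ) - 1)
  have harg : (((n : ℤ) - 1 : ℤ) : ℝ) + 1 = (n : ℝ) := by push_cast; ring
  rw [harg] at hU
  simp only [Polynomial.eval_mul, Polynomial.eval_intCast, mNode]
  push_cast
  rw [mul_assoc, hU, mSinNalpha n k hn]

lemma mWd_node_val (n k : ℕ) (hn : 1 ≤ n) (hk : k < n) :
    (Polynomial.derivative (mW n)).eval (mNode n k) * ((2:ℝ)^(n-1) * Real.sin (mAng n k))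
      = n * (-1)^k := by
  have h := mTd_node n k hn hk
  rw [mTW n hn, Polynomial.derivative_C_mul, Polynomial.eval_mul, Polynomial.eval_C] at h
  linear_combination h

lemma mWd_ne (n k : ℕ) (hn : 1 ≤ n) (hk : k < n) :
    (Polynomial.derivative (mW n)).eval (mNode n k) ≠ 0 := by
  intro h0
  have h := mWd_node_val n k hn hk
  rw [h0, zero_mul] at h
  have habs := congrArg abs h
  rw [abs_zero, abs_mul, abs_pow, abs_neg, abs_one, one_pow, mul_one,
    abs_of_nonneg (by positivity : (0:ℝ) ≤ (n:ℝ))] at habs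
  have : (0:ℝ) < n := by exact_mod_cast hn
  linarith

lemma mInterp (n : ℕ) (hn : 1 ≤ n) (G : Polynomial ℝ) (hG : G.natDegree < n) (x : ℝ) :
    G.eval x = ∑ k ∈ Finset.range n,
      (G.eval (mNode n k) / (Polynomial.derivative (mW n)).eval (mNode n k))
        * ∏ j ∈ (Finset.range n).erase k, (x - mNode n j) := by
  set B : ℕ → Polynomial ℝ := fun k =>
    Polynomial.C (G.eval (mNode n k) / (Polynomial.derivative (mW n)).eval (mNode n k))
      * ∏ j ∈ (Finset.range n).erase k, (Polynomial.X - Polynomial.C (mNode n j)) with hB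
  set H : Polynomial ℝ := G - ∑ k ∈ Finset.range n, B k with hHdef
  have hHeval : ∀ i < n, H.eval (mNode n i) = 0 := by
    intro i hi
    rw [hHdef, Polynomial.eval_sub, Polynomial.eval_finset_sum]
    have hterm : ∀ k ∈ Finset.range n,
        (B k).eval (mNode n i) = if k = i then G.eval (mNode n i) else 0 := by
      intro k hk
      rw [Finset.mem_range] at hk
      rw [hB]
      simp only [Polynomial.eval_mul, Polynomial.eval_C, Polynomial.eval_prod,
        Polynomial.eval_sub, Polynomial.eval_X]
      by_cases hki : k = i
      · subst hki
        rw [if_pos rfl, ← mWd_node n k hk]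
        exact div_mul_cancel₀ _ (mWd_ne n k hn hk)
      · rw [if_neg hki]
        apply mul_eq_zero_of_right
        apply Finset.prod_eq_zero (Finset.mem_erase.mpr ⟨Ne.symm hki, Finset.mem_range.mpr hi⟩)
        ring
    rw [Finset.sum_congr rfl hterm, Finset.sum_ite_eq' (Finset.range n) i _,
      if_pos (Finset.mem_range.mpr hi)]
    ring
  have hHdeg : H.natDegree < n := by
    rw [hHdef]
    apply lt_of_le_of_lt (Polynomial.natDegree_sub_le _ _)
    rw [max_lt_iff]
    refine ⟨hG, ?_⟩
    apply lt_of_le_of_lt (Polynomial.natDegree_sum_le_of_forall_le _ _ ?_) (?_ : n - 1 < n)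
    · intro k hk
      rw [hB]
      apply le_trans (Polynomial.natDegree_mul_le)
      have hprodDeg : (∏ j ∈ (Finset.range n).erase k,
          (Polynomial.X - Polynomial.C (mNode n j))).natDegree = n - 1 := by
        rw [Polynomial.natDegree_prod_of_monic _ _ (fun j _ => Polynomial.monic_X_sub_C _)]
        simp only [Polynomial.natDegree_X_sub_C, Finset.sum_const, smul_eq_mul, mul_one]
        rw [Finset.card_erase_of_mem hk]
        simp
      simp [hprodDeg]
    · omega
  have hH0 : H = 0 := by
    apply Polynomial.eq_zero_of_natDegree_lt_card_of_eval_eq_zero' H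
      ((Finset.range n).image (mNode n))
    · intro y hy
      rw [Finset.mem_image] at hy
      obtain ⟨k, hk, rfl⟩ := hy
      exact hHeval k (Finset.mem_range.mp hk)
    · rw [Finset.card_image_of_injOn (mNode_inj n)]
      simpa using hHdeg
  have hGeq : G = ∑ k ∈ Finset.range n, B k := by
    have : G - ∑ k ∈ Finset.range n, B k = 0 := hH0
    linear_combination this
  conv_lhs => rw [hGeq]
  rw [Polynomial.eval_finset_sum]
  apply Finset.sum_congr rfl
  intro k _
  rw [hB]
  simp only [Polynomial.eval_mul, Polynomial.eval_C, Polynomial.eval_prod,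
    Polynomial.eval_sub, Polynomial.eval_X]


lemma mSinMulLe : ∀ (m : ℕ) (θ : ℝ), |Real.sin ((m:ℝ) * θ)| ≤ (m:ℝ) * |Real.sin θ| := by
  intro m
  induction m with
  | zero => simp
  | succ m ih =>
    intro θ
    have harg : ((m+1:ℕ):ℝ) * θ = (m:ℝ) * θ + θ := by push_cast; ring
    rw [harg, Real.sin_add]
    calc |Real.sin ((m:ℝ)*θ) * Real.cos θ + Real.cos ((m:ℝ)*θ) * Real.sin θ|
        ≤ |Real.sin ((m:ℝ)*θ) * Real.cos θ| + |Real.cos ((m:ℝ)*θ) * Real.sin θ| := abs_add_le _ _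
      _ ≤ |Real.sin ((m:ℝ)*θ)| + |Real.sin θ| := by
          rw [abs_mul, abs_mul]
          have h1 := Real.abs_cos_le_one θ
          have h2 := Real.abs_cos_le_one ((m:ℝ)*θ)
          have h3 := abs_nonneg (Real.sin ((m:ℝ)*θ))
          have h4 := abs_nonneg (Real.sin θ)
          nlinarith
      _ ≤ (m:ℝ) * |Real.sin θ| + |Real.sin θ| := by linarith [ih θ]
      _ = ((m+1:ℕ):ℝ) * |Real.sin θ| := by push_cast; ring

lemma mU_bound (m : ℕ) (x : ℝ) (hx : x ∈ Icc (-1:ℝ) 1) :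
    |(Polynomial.Chebyshev.U ℝ m).eval x| ≤ (m:ℝ) + 1 := by
  have hsub : Icc (-1:ℝ) 1 ⊆ {y : ℝ | |(Polynomial.Chebyshev.U ℝ m).eval y| ≤ (m:ℝ) + 1} := by
    rw [← closure_Ioo (by norm_num : (-1:ℝ) ≠ 1)]
    apply closure_minimal
    · intro y hy
      obtain ⟨hy1, hy2⟩ := hy
      set θ := Real.arccos y with hθ
      have hθ1 : 0 < θ := Real.arccos_pos.mpr hy2
      have hcos : Real.cos θ = y := Real.cos_arccos (le_of_lt hy1) (le_of_lt hy2)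
      have hθ2 : θ < π := by
        rcases lt_or_eq_of_le (Real.arccos_le_pi y) with h | h
        · exact h
        · exfalso
          rw [hθ, h, Real.cos_pi] at hcos
          linarith
      have hsin : 0 < Real.sin θ := Real.sin_pos_of_pos_of_lt_pi hθ1 hθ2
      have hU := Polynomial.Chebyshev.U_real_cos θ (m:ℤ)
      rw [hcos] at hU
      have harg : (((m:ℤ):ℝ) + 1) * θ = ((m+1:ℕ):ℝ) * θ := by push_cast; ring
      rw [harg] at hU
      simp only [mem_setOf_eq]
      have h1 : |(Polynomial.Chebyshev.U ℝ m).eval y| * Real.sin θ ≤ ((m:ℝ)+1) * Real.sin θ := by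
        have e1 : |(Polynomial.Chebyshev.U ℝ m).eval y| * Real.sin θ
            = |(Polynomial.Chebyshev.U ℝ m).eval y * Real.sin θ| := by
          rw [abs_mul, abs_of_pos hsin]
        rw [e1, hU]
        calc |Real.sin (((m+1:ℕ):ℝ) * θ)| ≤ ((m+1:ℕ):ℝ) * |Real.sin θ| := mSinMulLe (m+1) θ
          _ = ((m:ℝ)+1) * Real.sin θ := by rw [abs_of_pos hsin]; push_cast; ring
      exact le_of_mul_le_mul_right h1 hsin
    · exact isClosed_le ((Polynomial.continuous _).abs) continuous_const
  exact hsub hx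

lemma mTd_bound (n : ℕ) (hn : 1 ≤ n) (x : ℝ) (hx : x ∈ Icc (-1:ℝ) 1) :
    |(Polynomial.derivative (Polynomial.Chebyshev.T ℝ n)).eval x| ≤ (n:ℝ)^2 := by
  rw [Polynomial.Chebyshev.T_derivative_eq_U]
  simp only [Polynomial.eval_mul, Polynomial.eval_intCast]
  rw [abs_mul]
  have hcast : |((n:ℤ):ℝ)| = (n:ℝ) := by
    push_cast
    exact abs_of_nonneg (by positivity)
  have hidx : ((n:ℤ) - 1) = ((n-1:ℕ):ℤ) := by omega
  rw [hcast, hidx]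
  have hU := mU_bound (n-1) x hx
  have hc2 : ((n-1:ℕ):ℝ) + 1 = (n:ℝ) := by
    rw [Nat.cast_sub hn]
    push_cast
    ring
  rw [hc2] at hU
  have hn0 : (0:ℝ) ≤ (n:ℝ) := by positivity
  nlinarith

lemma mRight (n : ℕ) (hn : 1 ≤ n) (F : Polynomial ℝ) (hF : F.natDegree ≤ n)
    (M : ℝ) (hM : ∀ y ∈ Icc (-1:ℝ) 1, |F.eval y| ≤ M) (x : ℝ)
    (hx1 : mNode n 0 < x) (hx2 : x ≤ 1) :
    |(Polynomial.derivative F).eval x| ≤ (n:ℝ)^2 * M := by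
  have hM0 : 0 ≤ M := le_trans (abs_nonneg _) (hM 0 (by constructor <;> norm_num))
  set G := Polynomial.derivative F with hGdef
  have hGdeg : G.natDegree < n := by
    have h := Polynomial.natDegree_derivative_le F
    rw [← hGdef] at h
    omega
  have hxIcc : x ∈ Icc (-1:ℝ) 1 := by
    constructor
    · have : (-1:ℝ) ≤ mNode n 0 := Real.neg_one_le_cos _
      linarith
    · exact hx2
  have hnodes_lt : ∀ k < n, mNode n k < x := by
    intro k hk
    rcases Nat.eq_zero_or_pos k with rfl | hkpos
    · exact hx1
    · exact lt_trans (mNode_strictAnti n 0 k hkpos hk) hx1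
  have hGnode : ∀ k < n, |G.eval (mNode n k)| * Real.sin (mAng n k) ≤ (n:ℝ) * M := by
    intro k hk
    have hb := mBernstein n hn F hF M hM (mAng n k)
    rw [abs_mul, abs_of_pos (mSin_pos n k hk)] at hb
    calc |G.eval (mNode n k)| * Real.sin (mAng n k)
        = Real.sin (mAng n k) * |(Polynomial.derivative F).eval (Real.cos (mAng n k))| := by
          rw [hGdef, mNode]; ring
      _ ≤ (n:ℝ) * M := hb
  have hcoeff : ∀ k < n,
      |G.eval (mNode n k) / (Polynomial.derivative (mW n)).eval (mNode n k)|
        ≤ 2^(n-1) * M := by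
    intro k hk
    have hs := mSin_pos n k hk
    have h := mWd_node_val n k hn hk
    have habs : |(Polynomial.derivative (mW n)).eval (mNode n k)|
        * (2^(n-1) * Real.sin (mAng n k)) = (n:ℝ) := by
      have h2 := congrArg abs h
      rw [abs_mul, abs_of_pos (show (0:ℝ) < 2^(n-1) * Real.sin (mAng n k) by positivity),
        abs_mul, abs_pow, abs_neg, abs_one, one_pow, mul_one,
        abs_of_nonneg (by positivity : (0:ℝ) ≤ (n:ℝ))] at h2
      exact h2
    have hWpos : 0 < |(Polynomial.derivative (mW n)).eval (mNode n k)| := by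
      rcases (abs_nonneg ((Polynomial.derivative (mW n)).eval (mNode n k))).lt_or_eq with h' | h'
      · exact h'
      · exfalso
        rw [← h', zero_mul] at habs
        have : (0:ℝ) < n := by exact_mod_cast hn
        linarith
    rw [abs_div, div_le_iff₀ hWpos]
    have key : |G.eval (mNode n k)| * Real.sin (mAng n k)
        ≤ (2^(n-1) * M * |(Polynomial.derivative (mW n)).eval (mNode n k)|)
            * Real.sin (mAng n k) := by
      calc |G.eval (mNode n k)| * Real.sin (mAng n k) ≤ (n:ℝ) * M := hGnode k hk
        _ = M * ((n:ℝ)) := by ring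
        _ = M * (|(Polynomial.derivative (mW n)).eval (mNode n k)|
              * (2^(n-1) * Real.sin (mAng n k))) := by rw [habs]
        _ = (2^(n-1) * M * |(Polynomial.derivative (mW n)).eval (mNode n k)|)
              * Real.sin (mAng n k) := by ring
    exact le_of_mul_le_mul_right key hs
  have hinterp := mInterp n hn G hGdeg x
  rw [hinterp]
  have hprodpos : ∀ k ∈ Finset.range n,
      (0:ℝ) < ∏ j ∈ (Finset.range n).erase k, (x - mNode n j) := by
    intro k _
    apply Finset.prod_pos
    intro j hj
    have hjn : j < n := Finset.mem_range.mp (Finset.mem_of_mem_erase hj)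
    have := hnodes_lt j hjn
    linarith
  calc |∑ k ∈ Finset.range n,
        G.eval (mNode n k) / (Polynomial.derivative (mW n)).eval (mNode n k)
          * ∏ j ∈ (Finset.range n).erase k, (x - mNode n j)|
      ≤ ∑ k ∈ Finset.range n,
          |G.eval (mNode n k) / (Polynomial.derivative (mW n)).eval (mNode n k)
            * ∏ j ∈ (Finset.range n).erase k, (x - mNode n j)| :=
        Finset.abs_sum_le_sum_abs _ _
    _ ≤ ∑ k ∈ Finset.range n,
          2^(n-1) * M * ∏ j ∈ (Finset.range n).erase k, (x - mNode n j) := by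
        apply Finset.sum_le_sum
        intro k hk
        rw [abs_mul, abs_of_pos (hprodpos k hk)]
        apply mul_le_mul_of_nonneg_right (hcoeff k (Finset.mem_range.mp hk))
          (le_of_lt (hprodpos k hk))
    _ = 2^(n-1) * M * ∑ k ∈ Finset.range n,
          ∏ j ∈ (Finset.range n).erase k, (x - mNode n j) := by
        rw [Finset.mul_sum]
    _ = M * (2^(n-1) * (Polynomial.derivative (mW n)).eval x) := by
        rw [← mWd_eval n x]; ring
    _ = M * (Polynomial.derivative (Polynomial.Chebyshev.T ℝ n)).eval x := by
        rw [mTW n hn, Polynomial.derivative_C_mul, Polynomial.eval_mul, Polynomial.eval_C]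
    _ ≤ M * (n:ℝ)^2 := by
        apply mul_le_mul_of_nonneg_left _ hM0
        exact le_trans (le_abs_self _) (mTd_bound n hn x hxIcc)
    _ = (n:ℝ)^2 * M := by ring

lemma mMid (n : ℕ) (hn : 1 ≤ n) (F : Polynomial ℝ) (hF : F.natDegree ≤ n)
    (M : ℝ) (hM : ∀ y ∈ Icc (-1:ℝ) 1, |F.eval y| ≤ M) (x : ℝ)
    (hx : x ∈ Icc (-1:ℝ) 1) (hmid : |x| ≤ mNode n 0) :
    |(Polynomial.derivative F).eval x| ≤ (n:ℝ)^2 * M := by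
  set θ := Real.arccos x with hθ
  have hcos : Real.cos θ = x := Real.cos_arccos hx.1 hx.2
  have hsin : Real.sin θ = Real.sqrt (1 - x^2) := Real.sin_arccos x
  have hb := mBernstein n hn F hF M hM θ
  rw [hcos] at hb
  -- sin θ ≥ sin (mAng n 0) ≥ 1/n
  have hang0 : mAng n 0 = π / (2*n) := by
    rw [mAng]
    push_cast
    ring
  have hsin0 : Real.sin (mAng n 0) = Real.sqrt (1 - (mNode n 0)^2) := by
    have h1 := Real.sin_sq_add_cos_sq (mAng n 0)
    have h2 : Real.sin (mAng n 0) ^ 2 = 1 - (mNode n 0)^2 := by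
      rw [mNode]; linarith
    rw [← h2, Real.sqrt_sq (le_of_lt (mSin_pos n 0 hn))]
  have hsin_ge : Real.sin (mAng n 0) ≤ Real.sin θ := by
    rw [hsin, hsin0]
    apply Real.sqrt_le_sqrt
    have h1 : x^2 ≤ (mNode n 0)^2 := by
      have := abs_nonneg x
      nlinarith [sq_abs x]
    linarith
  have honen : 1 ≤ (n:ℝ) * Real.sin (mAng n 0) := by
    have hpi := Real.pi_pos
    have hnpos : (0:ℝ) < n := by exact_mod_cast hn
    have hms := Real.mul_le_sin (x := π / (2*n)) (by positivity) ?hle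
    case hle =>
      rw [div_le_div_iff₀ (by positivity) (by norm_num)]
      have : (1:ℝ) ≤ n := by exact_mod_cast hn
      nlinarith
    rw [hang0]
    have harith : 2 / π * (π / (2 * n)) = 1 / n := by
      field_simp
    rw [harith] at hms
    calc (1:ℝ) = (n:ℝ) * (1 / n) := by field_simp
      _ ≤ (n:ℝ) * Real.sin (π / (2*n)) := by
          apply mul_le_mul_of_nonneg_left hms (le_of_lt hnpos)
  have hsinpos : 0 < Real.sin θ := by
    have h0 := mSin_pos n 0 hn
    linarith
  have h1 : |(Polynomial.derivative F).eval x| * Real.sin θ ≤ (n:ℝ) * M := by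
    rw [abs_mul, abs_of_pos hsinpos] at hb
    calc |(Polynomial.derivative F).eval x| * Real.sin θ
        = Real.sin θ * |(Polynomial.derivative F).eval x| := by ring
      _ ≤ (n:ℝ) * M := hb
  calc |(Polynomial.derivative F).eval x|
      = |(Polynomial.derivative F).eval x| * 1 := by ring
    _ ≤ |(Polynomial.derivative F).eval x| * ((n:ℝ) * Real.sin (mAng n 0)) := by
        apply mul_le_mul_of_nonneg_left honen (abs_nonneg _)
    _ ≤ |(Polynomial.derivative F).eval x| * ((n:ℝ) * Real.sin θ) := by
        apply mul_le_mul_of_nonneg_left _ (abs_nonneg _)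
        apply mul_le_mul_of_nonneg_left hsin_ge (by positivity)
    _ = (n:ℝ) * (|(Polynomial.derivative F).eval x| * Real.sin θ) := by ring
    _ ≤ (n:ℝ) * ((n:ℝ) * M) := by
        apply mul_le_mul_of_nonneg_left h1 (by positivity)
    _ = (n:ℝ)^2 * M := by ring

lemma mMain (n : ℕ) (hn : 1 ≤ n) (F : Polynomial ℝ) (hF : F.natDegree ≤ n)
    (M : ℝ) (hM : ∀ y ∈ Icc (-1:ℝ) 1, |F.eval y| ≤ M) (x : ℝ)
    (hx : x ∈ Icc (-1:ℝ) 1) :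
    |(Polynomial.derivative F).eval x| ≤ (n:ℝ)^2 * M := by
  by_cases h1 : mNode n 0 < x
  · exact mRight n hn F hF M hM x h1 hx.2
  · push_neg at h1
    by_cases h2 : x < -(mNode n 0)
    · -- mirror
      set Fm := F.comp (-Polynomial.X) with hFm
      have hFmdeg : Fm.natDegree ≤ n := by
        rw [hFm, Polynomial.natDegree_comp]
        have : (-Polynomial.X : Polynomial ℝ).natDegree = 1 := by
          simp [Polynomial.natDegree_neg, Polynomial.natDegree_X]
        rw [this, mul_one]
        exact hF
      have hMm : ∀ y ∈ Icc (-1:ℝ) 1, |Fm.eval y| ≤ M := by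
        intro y hy
        rw [hFm, Polynomial.eval_comp]
        simp only [Polynomial.eval_neg, Polynomial.eval_X]
        exact hM (-y) (by constructor <;> [linarith [hy.2]; linarith [hy.1]])
      have hr := mRight n hn Fm hFmdeg M hMm (-x) (by linarith) (by linarith [hx.1])
      have hder : (Polynomial.derivative Fm).eval (-x)
          = -((Polynomial.derivative F).eval x) := by
        rw [hFm, Polynomial.derivative_comp]
        simp only [Polynomial.derivative_neg, Polynomial.derivative_X, Polynomial.eval_mul,
          Polynomial.eval_neg, Polynomial.eval_comp, Polynomial.eval_X, Polynomial.eval_one]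
        ring
      rw [hder, abs_neg] at hr
      exact hr
    · push_neg at h2
      apply mMid n hn F hF M hM x hx
      rw [abs_le]
      constructor <;> linarith

theorem markov_main (n : ℕ) (F : Polynomial ℝ) (hF : F.natDegree ≤ n) :
    ∀ x ∈ Icc (-1 : ℝ) 1,
      |(Polynomial.derivative F).eval x| ≤
        (n : ℝ) ^ 2 * sSup ((fun y => |F.eval y|) '' Icc (-1 : ℝ) 1) := by
  intro x hx
  set M := sSup ((fun y => |F.eval y|) '' Icc (-1 : ℝ) 1) with hMdef
  rcases Nat.eq_zero_or_pos n with rfl | hn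
  · have hC := Polynomial.eq_C_of_natDegree_le_zero hF
    rw [hC]
    simp
  · have hbdd : BddAbove ((fun y => |F.eval y|) '' Icc (-1 : ℝ) 1) := by
      apply IsCompact.bddAbove
      apply IsCompact.image isCompact_Icc
      exact (Polynomial.continuous F).abs
    have hM : ∀ y ∈ Icc (-1:ℝ) 1, |F.eval y| ≤ M := fun y hy =>
      le_csSup hbdd (Set.mem_image_of_mem _ hy)
    exact mMain n hn F hF M hM x hx

end MarkovAux
open Set

/-- Markov's inequality for polynomials: if `F` is a real polynomial of degree at most `n`,
then `max_{x ∈ [−1,1]} |F′(x)| ≤ n² · max_{x ∈ [−1,1]} |F(x)|`. -/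
theorem stmt_10 (n : ℕ) (F : Polynomial ℝ) (hF : F.natDegree ≤ n) :
    ∀ x ∈ Icc (-1 : ℝ) 1,
      |(Polynomial.derivative F).eval x| ≤
        (n : ℝ) ^ 2 * sSup ((fun y => |F.eval y|) '' Icc (-1 : ℝ) 1) := by
  exact markov_main n F hF
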